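/- arXiv:1806.00152 — 3 statements merged into one kernel-verified Lean document; each statement's English description precedes it below -/
import Mathlib

section
/- Let Ω be a finite set, X ⊆ Ω^k a symmetric subset (stable under permutation of coordinates), and f : X → ℂ a symmetric function. With F, F_τ, sign(τ) as in the distinct-coordinate sieving formula, we have F = Σ over conjugacy classes τ of S_k of sign(τ) · C(τ) · F_τ, where C(τ) is the size of the conjugacy class of τ. -/
open Finset Equiv

/-- The basic sign-sum identity: summing signs over the stabilizer of `x` detects
injectivity. -/
lemma sign_sum_fix {Ω : Type*} [DecidableEq Ω] {k : ℕ} (x : Fin k → Ω) :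
    ∑ σ : Equiv.Perm (Fin k),
        (if ∀ i, x (σ i) = x i then ((Equiv.Perm.sign σ : ℤ) : ℂ) else 0)
      = if Function.Injective x then 1 else 0 := by
  by_cases hinj : Function.Injective x
  · rw [if_pos hinj]
    rw [Finset.sum_eq_single (1 : Equiv.Perm (Fin k))]
    · simp
    · intro σ _ hσ
      rw [if_neg]
      intro h
      exact hσ (Equiv.ext fun i => hinj (h i))
    · simp
  · rw [if_neg hinj]
    simp only [Function.Injective, not_forall] at hinj
    obtain ⟨i, j, hxij, hij⟩ := hinj
    set t := Equiv.swap i j with ht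
    have hxt : ∀ m, x (t m) = x m := by
      intro m
      rcases eq_or_ne m i with rfl | hmi
      · simp [ht, Equiv.swap_apply_left, hxij]
      rcases eq_or_ne m j with rfl | hmj
      · simp [ht, Equiv.swap_apply_right, hxij]
      · simp [ht, Equiv.swap_apply_of_ne_of_ne hmi hmj]
    set term : Equiv.Perm (Fin k) → ℂ :=
      fun σ => if ∀ i, x (σ i) = x i then ((Equiv.Perm.sign σ : ℤ) : ℂ) else 0 with hterm
    have hflip : ∀ σ : Equiv.Perm (Fin k), term (t * σ) = - term σ := by
      intro σ
      have hcond : (∀ i, x ((t * σ) i) = x i) ↔ (∀ i, x (σ i) = x i) := by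
        constructor
        · intro h m; have := h m; simpa [Equiv.Perm.mul_apply, hxt] using this
        · intro h m; simp [Equiv.Perm.mul_apply, hxt, h m]
      by_cases hc : ∀ i, x (σ i) = x i
      · rw [hterm]
        simp only [if_pos (hcond.2 hc), if_pos hc]
        have : Equiv.Perm.sign (t * σ) = - Equiv.Perm.sign σ := by
          simp [Equiv.Perm.sign_mul, Equiv.Perm.sign_swap hij, ht]
        rw [this]; push_cast; ring
      · rw [hterm]
        simp only [if_neg (fun h => hc (hcond.1 h)), if_neg hc, neg_zero]
    have hneg : ∑ σ : Equiv.Perm (Fin k), term σ = - ∑ σ : Equiv.Perm (Fin k), term σ := by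
      calc ∑ σ : Equiv.Perm (Fin k), term σ
          = ∑ σ : Equiv.Perm (Fin k), term ((Equiv.mulLeft t) σ) :=
            (Equiv.sum_comp (Equiv.mulLeft t) term).symm
        _ = ∑ σ : Equiv.Perm (Fin k), - term σ :=
            Finset.sum_congr rfl (fun σ _ => hflip σ)
        _ = - ∑ σ : Equiv.Perm (Fin k), term σ := by rw [Finset.sum_neg_distrib]
    have h2 : (2 : ℂ) * ∑ σ : Equiv.Perm (Fin k), term σ = 0 := by linear_combination hneg
    have := mul_eq_zero.1 h2
    simpa using this

lemma cycle_facts {k : ℕ} (σ : Equiv.Perm (Fin k)) :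
    σ.cycleType.card ≤ σ.cycleType.sum ∧ σ.cycleType.sum ≤ k := by
  constructor
  · have h := Multiset.card_nsmul_le_sum (s := σ.cycleType) (a := 1)
      (fun n hn => le_trans (by norm_num) (Equiv.Perm.two_le_of_mem_cycleType hn))
    simpa using h
  · rw [Equiv.Perm.sum_cycleType]
    simpa using Finset.card_le_univ σ.support

lemma sign_eq_pow {k : ℕ} (σ : Equiv.Perm (Fin k)) :
    ((Equiv.Perm.sign σ : ℤ) : ℂ)
      = (-1 : ℂ) ^ (k - ((k - σ.cycleType.sum) + σ.cycleType.card)) := by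
  obtain ⟨h1, h2⟩ := cycle_facts σ
  have he : k - ((k - σ.cycleType.sum) + σ.cycleType.card)
      = σ.cycleType.sum - σ.cycleType.card := by omega
  rw [he, Equiv.Perm.sign_of_cycleType]
  have hsum : σ.cycleType.sum + σ.cycleType.card
      = (σ.cycleType.sum - σ.cycleType.card) + 2 * σ.cycleType.card := by omega
  push_cast
  rw [hsum, pow_add, pow_mul]
  norm_num

/-- The symmetric version of the sieving formula: if `X` is symmetric and
`f` is symmetric, then `F = ∑_{conjugacy classes τ} sign(τ) C(τ) F_τ`, where `C(τ)` is
the size of the conjugacy class of `τ`, expressed via a set `R` of representatives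
containing exactly one element from each conjugacy class of `S_k`. -/
theorem stmt_3 {Ω : Type*} [Fintype Ω] [DecidableEq Ω] (k : ℕ) (hk : 0 < k)
    (X : Finset (Fin k → Ω)) (f : (Fin k → Ω) → ℂ)
    (hX : ∀ (τ : Equiv.Perm (Fin k)) (x : Fin k → Ω), x ∈ X → (x ∘ τ) ∈ X)
    (hf : ∀ (τ : Equiv.Perm (Fin k)) (x : Fin k → Ω), x ∈ X → f (x ∘ τ) = f x)
    (R : Finset (Equiv.Perm (Fin k)))
    (hR : ∀ σ : Equiv.Perm (Fin k), ∃! τ, τ ∈ R ∧ IsConj τ σ) :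
    ∑ x ∈ X.filter (fun x => Function.Injective x), f x
      = ∑ τ ∈ R,
          (-1 : ℂ) ^ (k - ((k - τ.cycleType.sum) + τ.cycleType.card)) *
            (Nat.card {σ : Equiv.Perm (Fin k) // IsConj τ σ}) *
            ∑ x ∈ X.filter (fun x => ∀ i, x (τ i) = x i), f x := by
  classical
  set F : Equiv.Perm (Fin k) → ℂ :=
    fun σ => ∑ x ∈ X.filter (fun x => ∀ i, x (σ i) = x i), f x with hF
  -- Step 1: the full sieving formula over all of S_k
  have main : ∑ x ∈ X.filter (fun x => Function.Injective x), f x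
      = ∑ σ : Equiv.Perm (Fin k), ((Equiv.Perm.sign σ : ℤ) : ℂ) * F σ := by
    have : ∀ σ : Equiv.Perm (Fin k), ((Equiv.Perm.sign σ : ℤ) : ℂ) * F σ
        = ∑ x ∈ X, (if ∀ i, x (σ i) = x i then ((Equiv.Perm.sign σ : ℤ) : ℂ) else 0) * f x := by
      intro σ
      rw [hF]
      simp only [Finset.sum_filter, Finset.mul_sum]
      apply Finset.sum_congr rfl
      intro x _
      by_cases h : ∀ i, x (σ i) = x i <;> simp [h]
    simp only [this]
    rw [Finset.sum_comm]
    rw [Finset.sum_filter]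
    apply Finset.sum_congr rfl
    intro x _
    rw [← Finset.sum_mul, sign_sum_fix x]
    by_cases h : Function.Injective x <;> simp [h]
  rw [main]
  -- Step 2: F is a class function
  have hFconj : ∀ τ σ : Equiv.Perm (Fin k), IsConj τ σ → F σ = F τ := by
    intro τ σ hconj
    obtain ⟨c, hc⟩ := isConj_iff.1 hconj
    -- hc : c * τ * c⁻¹ = σ
    have hc' : ∀ i, σ (c i) = c (τ i) := by
      intro i
      have : σ * c = c * τ := by
        rw [← hc]; group
      calc σ (c i) = (σ * c) i := rfl
        _ = (c * τ) i := by rw [this]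
        _ = c (τ i) := rfl
    rw [hF]
    apply Finset.sum_nbij' (fun x => x ∘ c) (fun x => x ∘ c.symm)
    · intro x hx
      simp only [Finset.mem_filter] at hx ⊢
      refine ⟨hX c x hx.1, fun i => ?_⟩
      show x (c (τ i)) = x (c i)
      rw [← hc' i, hx.2 (c i)]
    · intro x hx
      simp only [Finset.mem_filter] at hx ⊢
      constructor
      · have := hX (c⁻¹) x hx.1
        simpa using this
      · intro i
        show x (c.symm (σ i)) = x (c.symm i)
        have h3 : c.symm (σ i) = τ (c.symm i) := by
          have h4 := hc' (c.symm i)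
          simp only [Equiv.apply_symm_apply] at h4
          rw [h4, Equiv.symm_apply_apply]
        rw [h3]
        exact hx.2 (c.symm i)
    · intro x _; ext i; simp
    · intro x _; ext i; simp
    · intro x hx
      simp only [Finset.mem_filter] at hx
      exact (hf c x hx.1).symm
  -- Step 3: group by conjugacy classes
  have hrep : ∀ σ : Equiv.Perm (Fin k), ∃ τ, (τ ∈ R ∧ IsConj τ σ) := fun σ => (hR σ).exists
  set rep : Equiv.Perm (Fin k) → Equiv.Perm (Fin k) :=
    fun σ => Classical.choose (hrep σ) with hrepdef
  have hrepmem : ∀ σ, rep σ ∈ R := fun σ => (Classical.choose_spec (hrep σ)).1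
  have hrepconj : ∀ σ, IsConj (rep σ) σ := fun σ => (Classical.choose_spec (hrep σ)).2
  have hgroup := Finset.sum_fiberwise_of_maps_to (s := Finset.univ) (t := R) (g := rep)
    (fun σ _ => hrepmem σ) (fun σ => ((Equiv.Perm.sign σ : ℤ) : ℂ) * F σ)
  rw [← hgroup]
  apply Finset.sum_congr rfl
  intro τ hτ
  have hfib : Finset.univ.filter (fun σ => rep σ = τ)
      = Finset.univ.filter (fun σ => IsConj τ σ) := by
    ext σ
    simp only [Finset.mem_filter, Finset.mem_univ, true_and]
    constructor
    · rintro rfl; exact hrepconj σ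
    · intro h
      exact (hR σ).unique ⟨hrepmem σ, hrepconj σ⟩ ⟨hτ, h⟩
  rw [hfib]
  have hterm : ∀ σ ∈ Finset.univ.filter (fun σ' => IsConj τ σ'),
      ((Equiv.Perm.sign σ : ℤ) : ℂ) * F σ
        = (-1 : ℂ) ^ (k - ((k - τ.cycleType.sum) + τ.cycleType.card)) * F τ := by
    intro σ hσ
    simp only [Finset.mem_filter, Finset.mem_univ, true_and] at hσ
    rw [hFconj τ σ hσ, sign_eq_pow σ]
    have : σ.cycleType = τ.cycleType := (Equiv.Perm.isConj_iff_cycleType_eq.1 hσ).symm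
    rw [this]
  rw [Finset.sum_congr rfl hterm, Finset.sum_const]
  have hcard : (Finset.univ.filter (fun σ => IsConj τ σ)).card
      = Nat.card {σ : Equiv.Perm (Fin k) // IsConj τ σ} := by
    rw [Nat.card_eq_fintype_card, Fintype.card_subtype]
  rw [hcard]
  simp only [nsmul_eq_mul]
  ring
end

section
/- Let q be a prime power, 1 ≤ k ≤ q − 1, and 0 ≤ r ≤ k. The number of polynomials g ∈ F_q[x] of degree at most k−1 such that x^k + g(x) has exactly r distinct roots in F_q equals C(q, r) · q^{k−r} · Σ_{j=0}^{k−r} (−1)^j C(q−r, j) q^{−j}. -/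
open Polynomial Finset

namespace Stmt9Aux

variable {F : Type*} [Field F] [Fintype F] [DecidableEq F]

noncomputable instance (k : ℕ) : Fintype (Polynomial.degreeLT F k) :=
  Fintype.ofEquiv _ (Polynomial.degreeLTEquiv F k).toEquiv.symm

lemma card_degreeLT (k : ℕ) :
    Fintype.card (Polynomial.degreeLT F k) = Fintype.card F ^ k := by
  rw [Fintype.card_congr (Polynomial.degreeLTEquiv F k).toEquiv]
  simp

omit [Fintype F] [DecidableEq F] in
lemma monic_aux {k : ℕ} (x : Polynomial.degreeLT F k) :
    ((X : F[X]) ^ k + (x : F[X])).Monic :=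
  monic_X_pow_add (Polynomial.mem_degreeLT.1 x.2)

omit [Fintype F] [DecidableEq F] in
lemma degree_aux {k : ℕ} (x : Polynomial.degreeLT F k) :
    ((X : F[X]) ^ k + (x : F[X])).degree = k := by
  rw [degree_add_eq_left_of_degree_lt, degree_X_pow]
  rw [degree_X_pow]
  exact Polynomial.mem_degreeLT.1 x.2

omit [Fintype F] [DecidableEq F] in
lemma natDegree_aux {k : ℕ} (x : Polynomial.degreeLT F k) :
    ((X : F[X]) ^ k + (x : F[X])).natDegree = k :=
  natDegree_eq_of_degree_eq_some (degree_aux x)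

lemma countN {k : ℕ} (S : Finset F) (hS : S.card ≤ k) :
    (Finset.univ.filter fun x : Polynomial.degreeLT F k =>
        ∀ a ∈ S, ((X : F[X]) ^ k + (x : F[X])).eval a = 0).card
      = Fintype.card F ^ (k - S.card) := by
  classical
  obtain ⟨s, hs⟩ : ∃ s, s = S.card := ⟨_, rfl⟩
  rw [← hs] at hS ⊢
  set P : F[X] := ∏ a ∈ S, (X - C a) with hP
  have hPm : P.Monic := monic_prod_of_monic _ _ fun a _ => monic_X_sub_C a
  have hPd : P.natDegree = s := by
    rw [hP, natDegree_prod _ _ (fun a _ => X_sub_C_ne_zero a)]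
    simp [← hs]
  have hPeval : ∀ a ∈ S, P.eval a = 0 := by
    intro a ha
    rw [hP, eval_prod]
    exact Finset.prod_eq_zero ha (by simp)
  -- divisibility on the filter
  have hdvd : ∀ x : Polynomial.degreeLT F k,
      (∀ a ∈ S, ((X : F[X]) ^ k + (x : F[X])).eval a = 0) →
      P * (((X : F[X]) ^ k + (x : F[X])) /ₘ P) = (X : F[X]) ^ k + (x : F[X]) := by
    intro x hx
    have hf0 : ((X : F[X]) ^ k + (x : F[X])) ≠ 0 := (monic_aux x).ne_zero
    have hd : P ∣ (X : F[X]) ^ k + (x : F[X]) := by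
      have : (S.val.map fun a => (X : F[X]) - C a).prod ∣ (X : F[X]) ^ k + (x : F[X]) := by
        rw [Multiset.prod_X_sub_C_dvd_iff_le_roots hf0]
        rw [Multiset.le_iff_subset S.nodup]
        intro a ha
        rw [mem_roots hf0]
        exact hx a ha
      rwa [hP, Finset.prod_eq_multiset_prod]
    have := modByMonic_add_div ((X : F[X]) ^ k + (x : F[X])) P
    rwa [(modByMonic_eq_zero_iff_dvd hPm).2 hd, zero_add] at this
  -- properties of the quotient
  have hQ : ∀ x : Polynomial.degreeLT F k,
      (∀ a ∈ S, ((X : F[X]) ^ k + (x : F[X])).eval a = 0) →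
      (((X : F[X]) ^ k + (x : F[X])) /ₘ P).Monic ∧
      (((X : F[X]) ^ k + (x : F[X])) /ₘ P).natDegree = k - s := by
    intro x hx
    have hfQ := hdvd x hx
    have hQ0 : ((X : F[X]) ^ k + (x : F[X])) /ₘ P ≠ 0 := by
      intro h
      apply (monic_aux x).ne_zero
      rw [← hfQ, h, mul_zero]
    have hmul := natDegree_mul hPm.ne_zero hQ0
    rw [hfQ, natDegree_aux, hPd] at hmul
    constructor
    · have := leadingCoeff_mul P (((X : F[X]) ^ k + (x : F[X])) /ₘ P)
      rw [hfQ, (monic_aux x).leadingCoeff, hPm.leadingCoeff, one_mul] at this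
      exact this.symm
    · omega
  -- properties of the product map
  have hprod : ∀ h : Polynomial.degreeLT F (k - s),
      (P * ((X : F[X]) ^ (k - s) + (h : F[X]))).Monic ∧
      (P * ((X : F[X]) ^ (k - s) + (h : F[X]))).natDegree = k := by
    intro h
    have hm : (P * ((X : F[X]) ^ (k - s) + (h : F[X]))).Monic := hPm.mul (monic_aux h)
    refine ⟨hm, ?_⟩
    rw [natDegree_mul hPm.ne_zero (monic_aux h).ne_zero, hPd, natDegree_aux]
    omega
  rw [← card_degreeLT (F := F) (k - s), ← Finset.card_univ]
  refine Finset.card_bij'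
    (i := fun x hx => ⟨((X : F[X]) ^ k + (x : F[X])) /ₘ P - X ^ (k - s), ?memi⟩)
    (j := fun h _ => ⟨P * ((X : F[X]) ^ (k - s) + (h : F[X])) - X ^ k, ?memj⟩)
    ?_ ?_ ?_ ?_
  case memi =>
    have hx' := (Finset.mem_filter.1 hx).2
    obtain ⟨hQm, hQd⟩ := hQ x hx'
    rw [Polynomial.mem_degreeLT]
    calc (((X : F[X]) ^ k + (x : F[X])) /ₘ P - X ^ (k - s)).degree
        < (((X : F[X]) ^ k + (x : F[X])) /ₘ P).degree := by
          apply degree_sub_lt _ hQm.ne_zero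
          · rw [hQm.leadingCoeff, leadingCoeff_X_pow]
          · rw [degree_X_pow, degree_eq_natDegree hQm.ne_zero, hQd]
      _ = ((k : ℕ) - s : ℕ) := by rw [degree_eq_natDegree hQm.ne_zero, hQd]
  case memj =>
    obtain ⟨hm, hd⟩ := hprod h
    rw [Polynomial.mem_degreeLT]
    calc (P * ((X : F[X]) ^ (k - s) + (h : F[X])) - X ^ k).degree
        < (P * ((X : F[X]) ^ (k - s) + (h : F[X]))).degree := by
          apply degree_sub_lt _ hm.ne_zero
          · rw [hm.leadingCoeff, leadingCoeff_X_pow]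
          · rw [degree_X_pow, degree_eq_natDegree hm.ne_zero, hd]
      _ = (k : ℕ) := by rw [degree_eq_natDegree hm.ne_zero, hd]
  · intro a ha; exact Finset.mem_univ _
  · intro h _
    rw [Finset.mem_filter]
    refine ⟨Finset.mem_univ _, ?_⟩
    intro a ha
    have : (X : F[X]) ^ k + (P * ((X : F[X]) ^ (k - s) + (h : F[X])) - X ^ k)
        = P * ((X : F[X]) ^ (k - s) + (h : F[X])) := by ring
    rw [this, eval_mul, hPeval a ha, zero_mul]
  · intro x hx
    have hx' := (Finset.mem_filter.1 hx).2
    apply Subtype.ext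
    simp only
    have : (X : F[X]) ^ (k - s) + (((X : F[X]) ^ k + (x : F[X])) /ₘ P - X ^ (k - s))
        = ((X : F[X]) ^ k + (x : F[X])) /ₘ P := by ring
    rw [this, hdvd x hx']
    ring
  · intro h _
    apply Subtype.ext
    simp only
    have : (X : F[X]) ^ k + (P * ((X : F[X]) ^ (k - s) + (h : F[X])) - X ^ k)
        = P * ((X : F[X]) ^ (k - s) + (h : F[X])) := by ring
    rw [this, mul_divByMonic_cancel_left _ hPm]
    ring


lemma cast_card_filter {α : Type*} [Fintype α] (p : α → Prop) [DecidablePred p] :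
    ((Finset.univ.filter p).card : ℝ) = ∑ x : α, if p x then (1 : ℝ) else 0 := by
  rw [Finset.card_filter, Nat.cast_sum]
  exact Finset.sum_congr rfl fun x _ => by split_ifs <;> simp

lemma sum_powerset_neg_one_pow_card_real {α : Type*} [DecidableEq α] (x : Finset α) :
    (∑ m ∈ x.powerset, (-1 : ℝ) ^ m.card) = if x = ∅ then 1 else 0 := by
  have := Finset.sum_powerset_neg_one_pow_card (x := x)
  have h2 : ((∑ m ∈ x.powerset, (-1 : ℤ) ^ m.card : ℤ) : ℝ)
      = ∑ m ∈ x.powerset, (-1 : ℝ) ^ m.card := by push_cast; rfl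
  rw [← h2, this]
  split_ifs <;> simp

end Stmt9Aux

open Stmt9Aux



/-- The number of polynomials `g` of degree at most `k-1` such that
`x^k + g(x)` has exactly `r` distinct roots in `F_q` equals
`C(q,r) q^(k-r) ∑_{j=0}^{k-r} (-1)^j C(q-r, j) q^(-j)`. -/
theorem stmt_9 {F : Type*} [Field F] [Fintype F] [DecidableEq F]
    (q k r : ℕ) (hcard : Fintype.card F = q)
    (hk : 1 ≤ k) (hkq : k ≤ q - 1) (hr : r ≤ k) :
    (Nat.card {g : Polynomial F // g.degree < (k : ℕ) ∧
        (Finset.univ.filter (fun a : F => (X ^ k + g).eval a = 0)).card = r} : ℝ)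
      = (q.choose r : ℝ) * (q : ℝ) ^ (k - r) *
          ∑ j ∈ Finset.range (k - r + 1), (-1 : ℝ) ^ j * ((q - r).choose j : ℝ) *
            ((q : ℝ)⁻¹) ^ j := by
  classical
  have hq1 : 1 ≤ q := hcard ▸ Fintype.card_pos
  have hkq' : k ≤ q := by omega
  have hq0 : (q : ℝ) ≠ 0 := by positivity
  set V := Polynomial.degreeLT F k with hV
  set Rt : V → Finset F := fun x => Finset.univ.filter fun a : F => (X ^ k + (x : F[X])).eval a = 0
    with hRt
  -- step 1 : subtype to finset count
  have e : {g : Polynomial F // g.degree < (k : ℕ) ∧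
        (Finset.univ.filter (fun a : F => (X ^ k + g).eval a = 0)).card = r}
      ≃ {x : V // (Rt x).card = r} :=
    { toFun := fun g => ⟨⟨g.1, Polynomial.mem_degreeLT.2 g.2.1⟩, g.2.2⟩
      invFun := fun x => ⟨x.1.1, Polynomial.mem_degreeLT.1 x.1.2, x.2⟩
      left_inv := fun g => rfl
      right_inv := fun x => rfl }
  have h1 : Nat.card {g : Polynomial F // g.degree < (k : ℕ) ∧
        (Finset.univ.filter (fun a : F => (X ^ k + g).eval a = 0)).card = r}
      = (Finset.univ.filter fun x : V => (Rt x).card = r).card := by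
    rw [Nat.card_congr e, Nat.card_eq_fintype_card, Fintype.card_subtype]
  -- step 2 : fiberwise
  have h2 : (Finset.univ.filter fun x : V => (Rt x).card = r).card
      = ∑ S ∈ Finset.powersetCard r (Finset.univ : Finset F),
          (Finset.univ.filter fun x : V => Rt x = S).card := by
    rw [Finset.card_eq_sum_card_fiberwise (f := Rt)
      (t := Finset.powersetCard r (Finset.univ : Finset F))
      (fun x hx => Finset.mem_powersetCard.2
        ⟨Finset.subset_univ _, (Finset.mem_filter.1 hx).2⟩)]
    refine Finset.sum_congr rfl fun S hS => ?_
    rw [Finset.filter_filter]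
    refine congrArg Finset.card ?_
    ext x
    have hScard := (Finset.mem_powersetCard.1 hS).2
    simp only [Finset.mem_filter, Finset.mem_univ, true_and]
    constructor
    · exact fun h => h.2
    · exact fun h => ⟨by rw [h, hScard], h⟩
  -- subset condition unfolds
  have hsub : ∀ (U : Finset F) (x : V),
      U ⊆ Rt x ↔ ∀ a ∈ U, (X ^ k + (x : F[X])).eval a = 0 := by
    intro U x
    simp [hRt, Finset.subset_iff]
  -- value of N
  have hNval : ∀ U : Finset F,
      ((Finset.univ.filter fun x : V => U ⊆ Rt x).card : ℝ)
        = if U.card ≤ k then (q : ℝ) ^ (k - U.card) else 0 := by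
    intro U
    have hfe : (Finset.univ.filter fun x : V => U ⊆ Rt x)
        = Finset.univ.filter fun x : V => ∀ a ∈ U, (X ^ k + (x : F[X])).eval a = 0 := by
      ext x
      simp only [Finset.mem_filter, hsub]
    rw [hfe]
    by_cases hU : U.card ≤ k
    · rw [countN U hU, if_pos hU, hcard]
      push_cast
      rfl
    · rw [if_neg hU]
      norm_cast
      rw [Finset.card_eq_zero, Finset.filter_eq_empty_iff]
      intro x _ hroot
      apply hU
      have hf0 : ((X : F[X]) ^ k + (x : F[X])) ≠ 0 := (monic_aux x).ne_zero
      have : U.val ⊆ ((X : F[X]) ^ k + (x : F[X])).roots := by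
        intro a ha
        rw [Polynomial.mem_roots hf0]
        exact hroot a ha
      have := Polynomial.card_le_degree_of_subset_roots this
      rwa [natDegree_aux] at this
  -- step 3 : inclusion-exclusion
  have h3 : ∀ S ∈ Finset.powersetCard r (Finset.univ : Finset F),
      ((Finset.univ.filter fun x : V => Rt x = S).card : ℝ)
        = ∑ T ∈ ((Finset.univ : Finset F) \ S).powerset, (-1 : ℝ) ^ T.card *
            ((Finset.univ.filter fun x : V => S ∪ T ⊆ Rt x).card : ℝ) := by
    intro S hS
    have swap : ∑ T ∈ ((Finset.univ : Finset F) \ S).powerset, (-1 : ℝ) ^ T.card *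
          ((Finset.univ.filter fun x : V => S ∪ T ⊆ Rt x).card : ℝ)
        = ∑ x : V, ∑ T ∈ ((Finset.univ : Finset F) \ S).powerset,
            (-1 : ℝ) ^ T.card * (if S ∪ T ⊆ Rt x then (1 : ℝ) else 0) := by
      rw [Finset.sum_comm]
      refine Finset.sum_congr rfl fun T _ => ?_
      rw [cast_card_filter, Finset.mul_sum]
    rw [swap, cast_card_filter]
    refine (Finset.sum_congr rfl fun x _ => ?_).symm
    by_cases hSx : S ⊆ Rt x
    · have hinner : ∑ T ∈ ((Finset.univ : Finset F) \ S).powerset,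
          (-1 : ℝ) ^ T.card * (if S ∪ T ⊆ Rt x then (1 : ℝ) else 0)
          = ∑ T ∈ (Rt x \ S).powerset, (-1 : ℝ) ^ T.card := by
        rw [← Finset.sum_subset
          (Finset.powerset_mono.2 (Finset.sdiff_subset_sdiff (Finset.subset_univ _) le_rfl))]
        · refine Finset.sum_congr rfl fun T hT => ?_
          have hT' := Finset.mem_powerset.1 hT
          have : S ∪ T ⊆ Rt x :=
            Finset.union_subset hSx (hT'.trans (Finset.sdiff_subset))
          rw [if_pos this, mul_one]
        · intro T hT hT2
          have hTuS := Finset.mem_powerset.1 hT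
          have : ¬ (S ∪ T ⊆ Rt x) := by
            intro hc
            apply hT2
            rw [Finset.mem_powerset, Finset.subset_sdiff]
            refine ⟨(Finset.subset_union_right).trans hc, ?_⟩
            exact Finset.disjoint_left.2 fun a haT haS =>
              (Finset.mem_sdiff.1 (hTuS haT)).2 haS
          rw [if_neg this, mul_zero]
      rw [hinner, sum_powerset_neg_one_pow_card_real]
      have : (Rt x \ S = ∅) ↔ (Rt x = S) := by
        rw [Finset.sdiff_eq_empty_iff_subset]
        exact ⟨fun h => Finset.Subset.antisymm h hSx, fun h => le_of_eq h⟩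
      exact if_congr this rfl rfl
    · have h0 : ∀ T ∈ ((Finset.univ : Finset F) \ S).powerset,
          (-1 : ℝ) ^ T.card * (if S ∪ T ⊆ Rt x then (1 : ℝ) else 0) = 0 := by
        intro T _
        have : ¬ (S ∪ T ⊆ Rt x) := fun hc => hSx ((Finset.subset_union_left).trans hc)
        rw [if_neg this, mul_zero]
      rw [Finset.sum_eq_zero h0, if_neg (fun h => hSx (le_of_eq h.symm))]
  -- step 4 : evaluate the inner sum for S of card r
  set v : ℝ := ∑ j ∈ Finset.range (k - r + 1),
      (-1 : ℝ) ^ j * ((q - r).choose j : ℝ) * (q : ℝ) ^ (k - r - j) with hv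
  have h4 : ∀ S ∈ Finset.powersetCard r (Finset.univ : Finset F),
      ((Finset.univ.filter fun x : V => Rt x = S).card : ℝ) = v := by
    intro S hS
    obtain ⟨hSu, hScard⟩ := Finset.mem_powersetCard.1 hS
    have hcompl : ((Finset.univ : Finset F) \ S).card = q - r := by
      rw [Finset.card_sdiff_of_subset (Finset.subset_univ _), Finset.card_univ, hcard, hScard]
    rw [h3 S hS]
    have step : ∀ T ∈ ((Finset.univ : Finset F) \ S).powerset,
        (-1 : ℝ) ^ T.card * ((Finset.univ.filter fun x : V => S ∪ T ⊆ Rt x).card : ℝ)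
        = (-1 : ℝ) ^ T.card * (if r + T.card ≤ k then (q : ℝ) ^ (k - r - T.card) else 0) := by
      intro T hT
      have hdisj : Disjoint S T := by
        have := Finset.mem_powerset.1 hT
        exact Finset.disjoint_left.2 fun a haS haT => (Finset.mem_sdiff.1 (this haT)).2 haS
      have hcu : (S ∪ T).card = r + T.card := by
        rw [Finset.card_union_of_disjoint hdisj, hScard]
      rw [hNval (S ∪ T), hcu, Nat.sub_add_eq]
    rw [Finset.sum_congr rfl step, Finset.sum_powerset, hcompl]
    have step2 : ∀ j ∈ Finset.range (q - r + 1),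
        (∑ T ∈ Finset.powersetCard j ((Finset.univ : Finset F) \ S),
          (-1 : ℝ) ^ T.card * (if r + T.card ≤ k then (q : ℝ) ^ (k - r - T.card) else 0))
        = ((q - r).choose j : ℝ) *
            ((-1 : ℝ) ^ j * (if r + j ≤ k then (q : ℝ) ^ (k - r - j) else 0)) := by
      intro j _
      rw [Finset.sum_congr rfl (fun T hT => by
        rw [(Finset.mem_powersetCard.1 hT).2]), Finset.sum_const,
        Finset.card_powersetCard, hcompl, nsmul_eq_mul]
    rw [Finset.sum_congr rfl step2, hv]
    rw [← Finset.sum_subset (Finset.range_subset_range.2 (by omega : k - r + 1 ≤ q - r + 1))]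
    · refine Finset.sum_congr rfl fun j hj => ?_
      have hj' : j ≤ k - r := by
        have := Finset.mem_range.1 hj; omega
      have hcond : r + j ≤ k := by omega
      rw [if_pos hcond]
      ring
    · intro j hj hj2
      have hj' : ¬ (r + j ≤ k) := by
        have := Finset.mem_range.1 hj
        have h2' : ¬ (j < k - r + 1) := fun h => hj2 (Finset.mem_range.2 h)
        omega
      rw [if_neg hj', mul_zero, mul_zero]
  -- put together
  rw [h1, h2]
  push_cast
  rw [Finset.sum_congr rfl h4, Finset.sum_const, Finset.card_powersetCard,
    Finset.card_univ, hcard, nsmul_eq_mul, mul_assoc]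
  congr 1
  rw [hv, Finset.mul_sum]
  refine Finset.sum_congr rfl fun j hj => ?_
  have hj' : j ≤ k - r := by have := Finset.mem_range.1 hj; omega
  have hp : (q : ℝ) ^ (k - r) * ((q : ℝ)⁻¹) ^ j = (q : ℝ) ^ (k - r - j) := by
    rw [inv_pow,
      show (q : ℝ) ^ (k - r) = (q : ℝ) ^ (k - r - j) * (q : ℝ) ^ j from by
        rw [← pow_add]; congr 1; omega,
      mul_assoc, mul_inv_cancel₀ (by positivity), mul_one]
  rw [← hp]
  ring
end

section
/- Let q be a prime power with q = p prime, and let k = ⌊cp⌋, m = ⌊p^δ⌋, r = k + ⌊p^λ⌋ where c ∈ (0,1), δ ∈ (0, 1/4), λ ∈ (0, δ) are fixed constants. Then lim_{p→∞} [m · C(k+m, m) · p^m · C(m√p + 1 + k + m, m√p + 1)] / C(p, r) = 0. -/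
open Filter

/-- Generalized (real-argument) binomial coefficient `C(a,b) = Γ(a+1)/(Γ(b+1)Γ(a-b+1))`. -/
noncomputable def gchoose (a b : ℝ) : ℝ :=
  Real.Gamma (a + 1) / (Real.Gamma (b + 1) * Real.Gamma (a - b + 1))

open Finset Nat in
lemma Gamma_add_nat' (b : ℝ) (hb : 0 < b) (K : ℕ) :
    Real.Gamma (b + K) = Real.Gamma b * ∏ i ∈ range K, (b + i) := by
  induction K with
  | zero => simp
  | succ K ih =>
    have h1 : b + (K + 1 : ℕ) = (b + K) + 1 := by push_cast; ring
    have h2 : (0:ℝ) < b + K := by positivity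
    rw [h1, Real.Gamma_add_one h2.ne', ih, prod_range_succ]
    ring

open Finset Nat in
/-- `gchoose (b+K) b` as an explicit product. -/
lemma gchoose_add_nat (b : ℝ) (hb : 0 < b) (K : ℕ) :
    gchoose (b + K) b = ∏ i ∈ range K, ((b + 1 + i) / (i + 1)) := by
  have hb1 : (0:ℝ) < b + 1 := by positivity
  have h1 : b + K + 1 = (b + 1) + K := by ring
  have h2 : b + K - b + 1 = (K:ℝ) + 1 := by ring
  have h3 : Real.Gamma ((K:ℝ) + 1) = (K ! : ℝ) := Real.Gamma_nat_eq_factorial K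
  rw [gchoose, h1, Gamma_add_nat' (b+1) hb1 K, h2, h3,
    ← Finset.prod_range_add_one_eq_factorial, Nat.cast_prod,
    mul_div_mul_left _ _ (Real.Gamma_pos_of_pos hb1).ne', ← Finset.prod_div_distrib]
  exact Finset.prod_congr rfl fun i _ => by push_cast; ring

open Finset Nat in
lemma gchoose_le_exp (b : ℝ) (hb : 0 < b) (K : ℕ) :
    gchoose (b + K) b ≤ Real.exp (b * (1 + Real.log K)) := by
  rw [gchoose_add_nat b hb K]
  calc ∏ i ∈ range K, ((b + 1 + i) / (i + 1))
      ≤ ∏ i ∈ range K, Real.exp (b / (i + 1)) := by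
        refine Finset.prod_le_prod (fun i _ => by positivity) (fun i _ => ?_)
        have hi : (0:ℝ) < (i:ℝ) + 1 := by positivity
        have h := Real.add_one_le_exp (b / ((i:ℝ)+1))
        have h2 : (b/((i:ℝ)+1)+1)*((i:ℝ)+1) = b + ((i:ℝ)+1) := by field_simp
        rw [div_le_iff₀ hi]
        nlinarith [mul_le_mul_of_nonneg_right h hi.le]
    _ = Real.exp (∑ i ∈ range K, b / (i + 1)) := by rw [Real.exp_sum]
    _ ≤ Real.exp (b * (1 + Real.log K)) := by
        apply Real.exp_le_exp.mpr
        have hharm : ((harmonic K : ℚ) : ℝ) = ∑ i ∈ range K, ((i:ℝ)+1)⁻¹ := by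
          rw [harmonic]
          push_cast
          ring
        have hsum : ∑ i ∈ range K, b / ((i:ℝ) + 1) = b * ((harmonic K : ℚ) : ℝ) := by
          rw [hharm, Finset.mul_sum]
          exact Finset.sum_congr rfl fun i _ => by rw [div_eq_mul_inv]
        rw [hsum]
        exact mul_le_mul_of_nonneg_left (harmonic_le_one_add_log K) hb.le

open Finset Nat in
lemma pow_div_le_choose (n k : ℕ) (h : k ≤ n) : ((n:ℝ)/k)^k ≤ (n.choose k : ℝ) := by
  have hd : ((n.choose k : ℝ)) = ∏ i ∈ range k, (((n - i : ℕ) : ℝ) / ((k - i : ℕ) : ℝ)) := by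
    rw [Finset.prod_div_distrib]
    have h1 : ∏ i ∈ range k, ((k - i : ℕ) : ℝ) = (k ! : ℝ) := by
      rw [← Nat.cast_prod]
      congr 1
      rw [← Finset.prod_range_reflect, ← Finset.prod_range_add_one_eq_factorial]
      refine Finset.prod_congr rfl fun j hj => ?_
      rw [Finset.mem_range] at hj
      omega
    have h2 : ∏ i ∈ range k, ((n - i : ℕ) : ℝ) = (n.descFactorial k : ℝ) := by
      rw [← Nat.cast_prod, Nat.descFactorial_eq_prod_range]
    rw [h1, h2, Nat.descFactorial_eq_factorial_mul_choose]
    push_cast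
    rw [mul_comm, mul_div_assoc, div_self (Nat.cast_ne_zero.mpr k.factorial_ne_zero), mul_one]
  have hstart : ((n:ℝ)/k)^k = ∏ _i ∈ range k, ((n:ℝ)/k) := by
    rw [Finset.prod_const, Finset.card_range]
  rw [hd, hstart]
  refine Finset.prod_le_prod (fun i _ => by positivity) (fun i hi => ?_)
  rw [Finset.mem_range] at hi
  have hkpos : (0:ℝ) < k := by
    have : 0 < k := by omega
    exact_mod_cast this
  have hki : (0:ℝ) < ((k - i : ℕ) : ℝ) := by
    have : 0 < k - i := by omega
    exact_mod_cast this
  rw [div_le_div_iff₀ hkpos hki]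
  have e1 : ((n - i : ℕ) : ℝ) = (n:ℝ) - i := by
    have hin : i ≤ n := by omega
    push_cast [hin]; ring
  have e2 : ((k - i : ℕ) : ℝ) = (k:ℝ) - i := by
    have hik : i ≤ k := by omega
    push_cast [hik]; ring
  rw [e1, e2]
  have hkn : (k:ℝ) ≤ n := by exact_mod_cast h
  have hi' : (0:ℝ) ≤ i := by positivity
  nlinarith


set_option maxHeartbeats 1000000 in
/-- With `k = ⌊cp⌋`, `m = ⌊p^δ⌋`, `r = k + ⌊p^λ⌋` for constants
`c ∈ (0,1)`, `δ ∈ (0,1/4)`, `λ ∈ (0,δ)`, as the prime `p → ∞`,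
`m C(k+m, m) p^m C(m√p + 1 + k + m, m√p + 1) / C(p, r) → 0`. -/
theorem stmt_16 (c δ lam : ℝ) (hc0 : 0 < c) (hc1 : c < 1)
    (hδ0 : 0 < δ) (hδ1 : δ < 1 / 4) (hlam0 : 0 < lam) (hlam1 : lam < δ)
    (k m r : ℕ → ℕ)
    (hk : ∀ p : ℕ, k p = ⌊c * (p : ℝ)⌋₊)
    (hm : ∀ p : ℕ, m p = ⌊(p : ℝ) ^ δ⌋₊)
    (hr : ∀ p : ℕ, r p = k p + ⌊(p : ℝ) ^ lam⌋₊) :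
    Tendsto (fun p : ℕ =>
        (m p : ℝ) * ((k p + m p).choose (m p) : ℝ) * (p : ℝ) ^ (m p) *
          gchoose ((m p : ℝ) * Real.sqrt p + 1 + (k p : ℝ) + (m p : ℝ))
            ((m p : ℝ) * Real.sqrt p + 1)
          / (p.choose (r p) : ℝ))
      (atTop ⊓ 𝓟 {p : ℕ | p.Prime}) (nhds 0) := by
  refine Tendsto.mono_left ?_ inf_le_left
  set c' : ℝ := (1 + c) / 2 with hc'def
  have hc'0 : 0 < c' := by rw [hc'def]; linarith
  have hc'1 : c' < 1 := by rw [hc'def]; linarith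
  have hcc' : c < c' := by rw [hc'def]; linarith
  have hlogc' : Real.log c' < 0 := Real.log_neg hc'0 hc'1
  set β : ℝ := c / 2 * Real.log c' with hβdef
  have hβ0 : β < 0 := mul_neg_of_pos_of_neg (by linarith) hlogc'
  have hcast : Tendsto (fun p : ℕ => (p : ℝ)) atTop atTop := tendsto_natCast_atTop_atTop
  -- the upper bound tends to 0
  have hupper : Tendsto (fun p : ℕ => Real.exp (β / 2 * p)) atTop (nhds 0) := by
    apply Real.tendsto_exp_atBot.comp
    have h1 : Tendsto (fun p : ℕ => (-(β / 2)) * (p : ℝ)) atTop atTop :=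
      Tendsto.const_mul_atTop (by linarith) hcast
    simpa [Function.comp_def, neg_mul, neg_neg] using tendsto_neg_atTop_atBot.comp h1
  refine tendsto_of_tendsto_of_tendsto_of_le_of_le' tendsto_const_nhds hupper ?_ ?_
  · -- nonnegativity
    filter_upwards with p
    have hsq : (0:ℝ) ≤ Real.sqrt p := Real.sqrt_nonneg _
    have h1 : (0:ℝ) < (m p : ℝ) * Real.sqrt p + 1 + (k p : ℝ) + (m p : ℝ) + 1 := by positivity
    have h2 : (0:ℝ) < (m p : ℝ) * Real.sqrt p + 1 + 1 := by positivity
    have h3e : ((m p : ℝ) * Real.sqrt p + 1 + (k p : ℝ) + (m p : ℝ))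
        - ((m p : ℝ) * Real.sqrt p + 1) + 1 = (k p : ℝ) + (m p : ℝ) + 1 := by ring
    have h3 : (0:ℝ) < ((m p : ℝ) * Real.sqrt p + 1 + (k p : ℝ) + (m p : ℝ))
        - ((m p : ℝ) * Real.sqrt p + 1) + 1 := by rw [h3e]; positivity
    have hg : 0 ≤ gchoose ((m p : ℝ) * Real.sqrt p + 1 + (k p : ℝ) + (m p : ℝ))
        ((m p : ℝ) * Real.sqrt p + 1) :=
      div_nonneg (Real.Gamma_pos_of_pos h1).le
        (mul_nonneg (Real.Gamma_pos_of_pos h2).le (Real.Gamma_pos_of_pos h3).le)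
    positivity
  · -- main upper bound
    have E1 : ∀ᶠ p : ℕ in atTop, 1 ≤ p := eventually_ge_atTop 1
    have E2 : ∀ᶠ p : ℕ in atTop, (p : ℝ) ^ (lam - 1) < c' - c := by
      have ht : Tendsto (fun p : ℕ => (p : ℝ) ^ (lam - 1)) atTop (nhds 0) := by
        have := (tendsto_rpow_neg_atTop (show (0:ℝ) < 1 - lam by linarith)).comp hcast
        simpa [neg_sub, Function.comp_def] using this
      exact ht.eventually (gt_mem_nhds (by linarith))
    have E3 : ∀ᶠ p : ℕ in atTop, 1 ≤ c / 2 * (p : ℝ) :=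
      (Tendsto.const_mul_atTop (by linarith : (0:ℝ) < c / 2) hcast).eventually_ge_atTop 1
    have E4 : ∀ᶠ p : ℕ in atTop, 1 ≤ (1 - c') * (p : ℝ) :=
      (Tendsto.const_mul_atTop (by linarith : (0:ℝ) < 1 - c') hcast).eventually_ge_atTop 1
    have E5 : ∀ᶠ p : ℕ in atTop, 46 ≤ -β / 2 * (p : ℝ) ^ ((1:ℝ)/8) := by
      have ht : Tendsto (fun p : ℕ => -β / 2 * (p : ℝ) ^ ((1:ℝ)/8)) atTop atTop :=
        Tendsto.const_mul_atTop (by linarith)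
          ((tendsto_rpow_atTop (by norm_num : (0:ℝ) < 1/8)).comp hcast)
      exact ht.eventually_ge_atTop 46
    filter_upwards [E1, E2, E3, E4, E5] with p hp1 hp2 hp3 hp4 hp5
    have hp0R : (0:ℝ) < p := by exact_mod_cast hp1
    have hp1R : (1:ℝ) ≤ p := by exact_mod_cast hp1
    have h2p0 : (0:ℝ) < 2 * p := by linarith
    -- basic floor estimates
    have hkle : (k p : ℝ) ≤ c * p := by rw [hk]; exact Nat.floor_le (by positivity)
    have hkge : c * p - 1 ≤ (k p : ℝ) := by rw [hk]; exact (Nat.sub_one_lt_floor _).le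
    have hmle : (m p : ℝ) ≤ (p : ℝ) ^ δ := by rw [hm]; exact Nat.floor_le (by positivity)
    have hlle : ((⌊(p : ℝ) ^ lam⌋₊ : ℕ) : ℝ) ≤ (p : ℝ) ^ lam := Nat.floor_le (by positivity)
    have hpδp : (p : ℝ) ^ δ ≤ p := by
      calc (p : ℝ) ^ δ ≤ (p : ℝ) ^ (1:ℝ) :=
            Real.rpow_le_rpow_of_exponent_le hp1R (by linarith)
        _ = p := Real.rpow_one _
    have hk_le : (k p : ℝ) ≤ p := by
      have h := mul_nonneg (show (0:ℝ) ≤ 1 - c by linarith only [hc1]) hp0R.le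
      linarith only [hkle, h]
    have hm_le : (m p : ℝ) ≤ p := hmle.trans hpδp
    have hkge' : c / 2 * (p:ℝ) ≤ (k p : ℝ) := by linarith only [hkge, hp3]
    have hK1 : 1 ≤ k p + m p := by
      have : (1:ℝ) ≤ (k p : ℝ) := le_trans hp3 hkge'
      have : 1 ≤ k p := by exact_mod_cast this
      omega
    have hKle : ((k p + m p : ℕ) : ℝ) ≤ 2 * p := by push_cast; linarith only [hk_le, hm_le]
    have hK1R : (1:ℝ) ≤ ((k p + m p : ℕ) : ℝ) := by exact_mod_cast hK1
    -- r estimates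
    have hplam : (p : ℝ) ^ lam ≤ (c' - c) * p := by
      have he : (p : ℝ) ^ lam = (p : ℝ) ^ (lam - 1) * p := by
        rw [← Real.rpow_add_one hp0R.ne' (lam - 1)]; ring_nf
      rw [he]
      exact mul_le_mul_of_nonneg_right hp2.le hp0R.le
    have hr_le : (r p : ℝ) ≤ c' * p := by
      rw [hr]; push_cast; linarith only [hkle, hlle, hplam]
    have hr_ge : c / 2 * p ≤ (r p : ℝ) := by
      rw [hr]; push_cast
      have h0 : (0:ℝ) ≤ ((⌊(p : ℝ) ^ lam⌋₊ : ℕ) : ℝ) := by positivity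
      linarith only [hkge', h0]
    have hr_pos : 0 < r p := by
      have : (1:ℝ) ≤ (r p : ℝ) := le_trans hp3 hr_ge
      exact_mod_cast lt_of_lt_of_le zero_lt_one this
    have hr_posR : (0:ℝ) < (r p : ℝ) := by exact_mod_cast hr_pos
    have hr_le_p : r p ≤ p := by
      have : (r p : ℝ) ≤ (p : ℝ) := by linarith only [hr_le, hp4]
      exact_mod_cast this
    have hDpos : (0:ℝ) < (p.choose (r p) : ℝ) := by exact_mod_cast Nat.choose_pos hr_le_p
    -- denominator lower bound
    have hDlow : (1 / c') ^ (r p) ≤ (p.choose (r p) : ℝ) := by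
      refine le_trans ?_ (pow_div_le_choose p (r p) hr_le_p)
      refine pow_le_pow_left₀ (by positivity) ?_ _
      rw [div_le_div_iff₀ hc'0 hr_posR]
      calc 1 * (r p : ℝ) = (r p : ℝ) := one_mul _
        _ ≤ c' * p := hr_le
        _ = (p : ℝ) * c' := mul_comm _ _
    have hDlow_pos : (0:ℝ) < (1 / c') ^ (r p) := by positivity
    -- numerator bounds
    set b : ℝ := (m p : ℝ) * Real.sqrt p + 1 with hbdef
    have hb0 : 0 < b := by
      have := Real.sqrt_nonneg (p:ℝ); positivity
    have hQ1 : (1:ℝ) ≤ (p : ℝ) ^ ((1:ℝ)/8) := Real.one_le_rpow hp1R (by norm_num)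
    have hQ34 : (1:ℝ) ≤ (p : ℝ) ^ ((3:ℝ)/4) := Real.one_le_rpow hp1R (by norm_num)
    have hble : b ≤ 2 * (p : ℝ) ^ ((3:ℝ)/4) := by
      have hsq : Real.sqrt (p:ℝ) = (p:ℝ) ^ ((1:ℝ)/2) := Real.sqrt_eq_rpow _
      have h1 : (m p : ℝ) * Real.sqrt p ≤ (p:ℝ) ^ δ * (p:ℝ) ^ ((1:ℝ)/2) := by
        rw [hsq]
        exact mul_le_mul_of_nonneg_right hmle (by positivity)
      have h2 : (p:ℝ) ^ δ * (p:ℝ) ^ ((1:ℝ)/2) = (p:ℝ) ^ (δ + 1/2) :=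
        (Real.rpow_add hp0R _ _).symm
      have h3 : (p:ℝ) ^ (δ + 1/2) ≤ (p:ℝ) ^ ((3:ℝ)/4) :=
        Real.rpow_le_rpow_of_exponent_le hp1R (by linarith)
      rw [hbdef]
      calc (m p : ℝ) * Real.sqrt p + 1 ≤ (p:ℝ) ^ ((3:ℝ)/4) + (p:ℝ) ^ ((3:ℝ)/4) := by
            refine add_le_add (by linarith only [h2 ▸ h1, h3]) hQ34
        _ = 2 * (p:ℝ) ^ ((3:ℝ)/4) := by ring
    -- log bounds
    have hlogp : Real.log p ≤ 8 * (p:ℝ) ^ ((1:ℝ)/8) := by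
      have h1 : Real.log ((p:ℝ) ^ ((1:ℝ)/8)) ≤ (p:ℝ) ^ ((1:ℝ)/8) - 1 :=
        Real.log_le_sub_one_of_pos (by positivity)
      have h2 : Real.log ((p:ℝ) ^ ((1:ℝ)/8)) = 1/8 * Real.log p := Real.log_rpow hp0R _
      linarith only [h1, h2, hQ1]
    have hlog2p : Real.log (2 * p) ≤ 9 * (p:ℝ) ^ ((1:ℝ)/8) := by
      have h1 : Real.log (2 * p) = Real.log 2 + Real.log p :=
        Real.log_mul two_ne_zero hp0R.ne'
      have h2 : Real.log 2 ≤ 1 := by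
        have := Real.log_le_sub_one_of_pos (show (0:ℝ) < 2 by norm_num)
        linarith only [this]
      linarith only [h1, h2, hlogp, hQ1]
    have hlog2p0 : 0 ≤ Real.log (2 * p) := Real.log_nonneg (by linarith)
    have hlogK : Real.log ((k p + m p : ℕ) : ℝ) ≤ Real.log (2 * p) :=
      Real.log_le_log (by linarith) hKle
    have hlogK0 : 0 ≤ Real.log ((k p + m p : ℕ) : ℝ) := Real.log_nonneg hK1R
    -- gchoose bound
    have harg : (m p : ℝ) * Real.sqrt p + 1 + (k p : ℝ) + (m p : ℝ)
        = b + ((k p + m p : ℕ) : ℝ) := by rw [hbdef]; push_cast; ring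
    have hgch : gchoose ((m p : ℝ) * Real.sqrt p + 1 + (k p : ℝ) + (m p : ℝ))
          ((m p : ℝ) * Real.sqrt p + 1)
        ≤ Real.exp (2 * (p:ℝ) ^ ((3:ℝ)/4) * (1 + Real.log (2 * p))) := by
      rw [harg, ← hbdef]
      refine le_trans (gchoose_le_exp b hb0 (k p + m p)) ?_
      apply Real.exp_le_exp.mpr
      have h1 : 1 + Real.log ((k p + m p : ℕ) : ℝ) ≤ 1 + Real.log (2 * p) := by
        linarith only [hlogK]
      refine mul_le_mul hble h1 (by linarith only [hlogK0]) (by positivity)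
    have hgch0 : 0 ≤ gchoose ((m p : ℝ) * Real.sqrt p + 1 + (k p : ℝ) + (m p : ℝ))
        ((m p : ℝ) * Real.sqrt p + 1) := by
      rw [harg]
      rw [gchoose_add_nat b hb0 (k p + m p)]
      exact Finset.prod_nonneg fun i _ => by positivity
    -- numerator pieces
    have hchoose_le : (((k p + m p).choose (m p) : ℕ) : ℝ) ≤ (2 * p) ^ (m p) := by
      calc (((k p + m p).choose (m p) : ℕ) : ℝ) ≤ (((k p + m p) ^ (m p) : ℕ) : ℝ) := by
            exact_mod_cast Nat.choose_le_pow _ _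
        _ = ((k p + m p : ℕ) : ℝ) ^ (m p) := by push_cast; ring
        _ ≤ (2 * p) ^ (m p) := pow_le_pow_left₀ (by positivity) hKle _
    have hppow_le : (p:ℝ) ^ (m p) ≤ (2 * p) ^ (m p) :=
      pow_le_pow_left₀ (by positivity) (by linarith) _
    -- assemble numerator bound
    set Nbar : ℝ := (p:ℝ) * (2 * p) ^ (m p) * (2 * p) ^ (m p) *
        Real.exp (2 * (p:ℝ) ^ ((3:ℝ)/4) * (1 + Real.log (2 * p))) with hNbar
    have hNle : (m p : ℝ) * ((k p + m p).choose (m p) : ℝ) * (p : ℝ) ^ (m p) *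
        gchoose ((m p : ℝ) * Real.sqrt p + 1 + (k p : ℝ) + (m p : ℝ))
          ((m p : ℝ) * Real.sqrt p + 1) ≤ Nbar := by
      rw [hNbar]
      have h1 : (m p : ℝ) * ((k p + m p).choose (m p) : ℝ) ≤ (p:ℝ) * (2 * p) ^ (m p) :=
        mul_le_mul hm_le hchoose_le (by positivity) (by positivity)
      have h2 : (m p : ℝ) * ((k p + m p).choose (m p) : ℝ) * (p : ℝ) ^ (m p)
          ≤ (p:ℝ) * (2 * p) ^ (m p) * (2 * p) ^ (m p) :=
        mul_le_mul h1 hppow_le (by positivity) (by positivity)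
      exact mul_le_mul h2 hgch hgch0 (by positivity)
    -- combine
    have step1 : (m p : ℝ) * ((k p + m p).choose (m p) : ℝ) * (p : ℝ) ^ (m p) *
          gchoose ((m p : ℝ) * Real.sqrt p + 1 + (k p : ℝ) + (m p : ℝ))
            ((m p : ℝ) * Real.sqrt p + 1) / (p.choose (r p) : ℝ)
        ≤ Nbar * c' ^ (r p) := by
      have hNbar0 : 0 ≤ Nbar := by rw [hNbar]; positivity
      have := div_le_div₀ hNbar0 hNle hDlow_pos hDlow
      calc _ ≤ Nbar / (1 / c') ^ (r p) := this
        _ = Nbar * c' ^ (r p) := by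
            rw [one_div, inv_pow, div_eq_mul_inv, inv_inv]
    refine step1.trans ?_
    -- rewrite as exponential and bound exponent
    have hrw : Nbar * c' ^ (r p) = Real.exp (Real.log p + (m p) * Real.log (2 * p)
        + (m p) * Real.log (2 * p) + 2 * (p:ℝ) ^ ((3:ℝ)/4) * (1 + Real.log (2 * p))
        + (r p) * Real.log c') := by
      have key : Real.exp (Real.log p + (m p) * Real.log (2 * p)
          + (m p) * Real.log (2 * p) + 2 * (p:ℝ) ^ ((3:ℝ)/4) * (1 + Real.log (2 * p))
          + (r p) * Real.log c') = Nbar * c' ^ (r p) := by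
        rw [Real.exp_add, Real.exp_add, Real.exp_add, Real.exp_add,
          Real.exp_nat_mul, Real.exp_nat_mul,
          Real.exp_log hp0R, Real.exp_log h2p0, Real.exp_log hc'0, hNbar]
      exact key.symm
    rw [hrw]
    apply Real.exp_le_exp.mpr
    -- exponent bound
    set Q : ℝ := (p:ℝ) ^ ((7:ℝ)/8) with hQdef
    have hQpos : 0 < Q := by rw [hQdef]; positivity
    have t1 : Real.log p ≤ 8 * Q := by
      have h : (p:ℝ) ^ ((1:ℝ)/8) ≤ Q := by
        rw [hQdef]; exact Real.rpow_le_rpow_of_exponent_le hp1R (by norm_num)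
      linarith only [hlogp, h]
    have t2 : (m p : ℝ) * Real.log (2 * p) ≤ 9 * Q := by
      have h1 : (m p : ℝ) * Real.log (2 * p) ≤ (p:ℝ) ^ δ * (9 * (p:ℝ) ^ ((1:ℝ)/8)) :=
        mul_le_mul hmle hlog2p hlog2p0 (by positivity)
      have h2 : (p:ℝ) ^ δ * (p:ℝ) ^ ((1:ℝ)/8) = (p:ℝ) ^ (δ + 1/8) :=
        (Real.rpow_add hp0R _ _).symm
      have h3 : (p:ℝ) ^ (δ + 1/8) ≤ Q := by
        rw [hQdef]
        exact Real.rpow_le_rpow_of_exponent_le hp1R (by linarith only [hδ1])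
      calc (m p : ℝ) * Real.log (2 * p) ≤ (p:ℝ) ^ δ * (9 * (p:ℝ) ^ ((1:ℝ)/8)) := h1
        _ = 9 * ((p:ℝ) ^ δ * (p:ℝ) ^ ((1:ℝ)/8)) := by ring
        _ = 9 * (p:ℝ) ^ (δ + 1/8) := by rw [h2]
        _ ≤ 9 * Q := by linarith only [h3]
    have t3 : 2 * (p:ℝ) ^ ((3:ℝ)/4) * (1 + Real.log (2 * p)) ≤ 20 * Q := by
      have h1 : 1 + Real.log (2 * p) ≤ 10 * (p:ℝ) ^ ((1:ℝ)/8) := by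
        linarith only [hlog2p, hQ1]
      have h2 : (p:ℝ) ^ ((3:ℝ)/4) * (p:ℝ) ^ ((1:ℝ)/8) = (p:ℝ) ^ ((3:ℝ)/4 + 1/8) :=
        (Real.rpow_add hp0R _ _).symm
      have h3 : (p:ℝ) ^ ((3:ℝ)/4 + 1/8) ≤ Q := by
        rw [hQdef]; exact Real.rpow_le_rpow_of_exponent_le hp1R (by norm_num)
      have h5 : 2 * (p:ℝ) ^ ((3:ℝ)/4) * (1 + Real.log (2 * p))
          ≤ 2 * (p:ℝ) ^ ((3:ℝ)/4) * (10 * (p:ℝ) ^ ((1:ℝ)/8)) :=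
        mul_le_mul_of_nonneg_left h1 (by positivity)
      calc 2 * (p:ℝ) ^ ((3:ℝ)/4) * (1 + Real.log (2 * p))
          ≤ 2 * (p:ℝ) ^ ((3:ℝ)/4) * (10 * (p:ℝ) ^ ((1:ℝ)/8)) := h5
        _ = 20 * ((p:ℝ) ^ ((3:ℝ)/4) * (p:ℝ) ^ ((1:ℝ)/8)) := by ring
        _ = 20 * (p:ℝ) ^ ((3:ℝ)/4 + 1/8) := by rw [h2]
        _ ≤ 20 * Q := by linarith only [h3]
    have t4 : (r p : ℝ) * Real.log c' ≤ β * p := by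
      have h := mul_le_mul_of_nonpos_right hr_ge hlogc'.le
      calc (r p : ℝ) * Real.log c' ≤ c / 2 * (p:ℝ) * Real.log c' := h
        _ = β * p := by rw [hβdef]; ring
    have t5 : 46 * Q ≤ -β / 2 * p := by
      have h1 : (p:ℝ) ^ ((1:ℝ)/8) * Q = (p:ℝ) := by
        rw [hQdef, ← Real.rpow_add hp0R, ← Real.rpow_one (p:ℝ)]
        norm_num
      have h6 : 46 * Q ≤ -β / 2 * (p:ℝ) ^ ((1:ℝ)/8) * Q :=
        mul_le_mul_of_nonneg_right hp5 hQpos.le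
      calc 46 * Q ≤ -β / 2 * (p:ℝ) ^ ((1:ℝ)/8) * Q := h6
        _ = -β / 2 * ((p:ℝ) ^ ((1:ℝ)/8) * Q) := by ring
        _ = -β / 2 * p := by rw [h1]
    linarith only [t1, t2, t3, t4, t5]
end
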